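/- The multivariate generating function over (a,b)-parking functions of length m satisfies: sum over π ∈ PF(a,b,m) of x_1^{#1(π)} ··· x_a^{#a(π)} = (x_1 + ... + x_a)(x_1 + ... + x_a + mb)^{m-1}, where #j(π) = #{i : π_i = j}. -/

import Mathlib

/-- The finite set of `(a,b)`-parking functions of length `m`, encoded as
functions `Fin m → Fin (a + (m-1)*b)`, where the value of car `k` is
`(π k : ℕ) + 1 ∈ {1, …, a+(m-1)b}`. -/
def abpf (a b m : ℕ) : Finset (Fin m → Fin (a + (m - 1) * b)) :=
  Finset.univ.filter (fun π =>
    ∀ i : Fin m,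
      (i : ℕ) + 1 ≤ (Finset.univ.filter (fun k => (π k : ℕ) + 1 ≤ a + (i : ℕ) * b)).card)

open Finset

set_option linter.unusedSectionVars false
set_option linter.unusedVariables false
set_option maxHeartbeats 1000000

section Aux

variable {ι : Type*} [Fintype ι] [DecidableEq ι]

/-- Generalized (a,b)-parking functions supported on a finset `C`. -/
def PFset (a b : ℕ) (C : Finset ι) : Finset (ι → ℕ) :=
  (Fintype.piFinset (fun i => if i ∈ C then Finset.range (a + (C.card - 1) * b) else {0})).filter
    (fun σ => ∀ j < C.card, j + 1 ≤ (C.filter fun k => σ k + 1 ≤ a + j * b).card)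

lemma PFset_empty_card (a b : ℕ) : (PFset a b (∅ : Finset ι)).card = 1 := by
  classical
  have h : PFset a b (∅ : Finset ι) = {fun _ => 0} := by
    ext σ
    simp [PFset, Fintype.mem_piFinset, funext_iff]
  rw [h, card_singleton]

lemma PFset_a_zero (b : ℕ) (C : Finset ι) (hC : C.Nonempty) : PFset 0 b C = ∅ := by
  classical
  ext σ
  simp only [PFset, mem_filter, Finset.notMem_empty, iff_false, not_and]
  intro _ h
  have h0 := h 0 (card_pos.2 hC)
  simp only [zero_mul, add_zero, Nat.zero_add] at h0
  have : (C.filter fun k => σ k + 1 ≤ 0).card = 0 := by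
    rw [Finset.card_eq_zero, Finset.filter_eq_empty_iff]
    intro k _; omega
  omega

lemma filter_card_split (B C : Finset ι) (h : B ⊆ C) (p : ι → Prop) [DecidablePred p] :
    (C.filter p).card = (B.filter p).card + ((C \ B).filter p).card := by
  rw [← Finset.union_sdiff_of_subset h, Finset.filter_union, Finset.card_union_of_disjoint]
  · rw [Finset.union_sdiff_of_subset h]
  · exact Finset.disjoint_filter_filter Finset.disjoint_sdiff

lemma fiber_sum (a b : ℕ) (ha : 1 ≤ a) (C B : Finset ι) (hBC : B ⊆ C) (X : ℕ → ℚ) :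
    ∑ σ ∈ (PFset a b C).filter (fun σ => C.filter (fun i => σ i < a) = B),
      ∏ i ∈ C.filter (fun i => σ i < a), X (σ i) =
    (∑ j ∈ Finset.range a, X j) ^ B.card * ((PFset (B.card * b) b (C \ B)).card : ℚ) := by
  classical
  set k := B.card with hk
  set n := (C \ B).card with hn
  have hcard : C.card = k + n := by
    have := Finset.card_le_card hBC
    rw [hk, hn, Finset.card_sdiff_of_subset hBC]; omega
  have hnk : n = C.card - k := by omega
  set A : Finset (ι → ℕ) :=
    Fintype.piFinset (fun i => if i ∈ B then Finset.range a else {0}) with hA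
  set P : Finset (ι → ℕ) := PFset (k * b) b (C \ B) with hP
  -- step 1: the sum equals a sum over A ×ˢ P
  have hstep1 : ∑ σ ∈ (PFset a b C).filter (fun σ => C.filter (fun i => σ i < a) = B),
      ∏ i ∈ C.filter (fun i => σ i < a), X (σ i) =
      ∑ p ∈ A ×ˢ P, ∏ i ∈ B, X (p.1 i) := by
    apply Finset.sum_nbij'
      (i := fun σ => (fun i => if i ∈ B then σ i else 0, fun i => if i ∈ C \ B then σ i - a else 0))
      (j := fun p => fun i => if i ∈ B then p.1 i else if i ∈ C then p.2 i + a else 0)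
    · -- maps to
      intro σ hσ
      rw [Finset.mem_filter] at hσ
      obtain ⟨hσP, hfib⟩ := hσ
      rw [PFset, Finset.mem_filter, Fintype.mem_piFinset] at hσP
      obtain ⟨hpi, hpark⟩ := hσP
      have hBmem : ∀ i ∈ B, i ∈ C ∧ σ i < a := by
        intro i hi; rw [← hfib] at hi; exact ⟨(Finset.mem_filter.1 hi).1, (Finset.mem_filter.1 hi).2⟩
      have hCBmem : ∀ i ∈ C \ B, a ≤ σ i := by
        intro i hi
        have hiC := (Finset.mem_sdiff.1 hi).1
        have hiB := (Finset.mem_sdiff.1 hi).2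
        by_contra hlt
        exact hiB (hfib ▸ Finset.mem_filter.2 ⟨hiC, by omega⟩)
      have hbound : ∀ i ∈ C, σ i < a + (C.card - 1) * b := by
        intro i hi
        have := hpi i
        rw [if_pos hi, Finset.mem_range] at this
        exact this
      rw [Finset.mem_product]
      constructor
      · rw [hA, Fintype.mem_piFinset]
        intro i
        by_cases hi : i ∈ B
        · simp only [hi, if_true, Finset.mem_range]
          exact (hBmem i hi).2
        · simp only [hi, if_false, Finset.mem_singleton]
      · rw [hP, PFset, Finset.mem_filter, Fintype.mem_piFinset]
        constructor
        · intro i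
          by_cases hi : i ∈ C \ B
          · simp only [hi, if_true, Finset.mem_range, ← hn]
            have h1 := hbound i (Finset.mem_sdiff.1 hi).1
            have h2 := hCBmem i hi
            have hn1 : 1 ≤ n := Finset.card_pos.2 ⟨i, hi⟩
            have : k * b + (n - 1) * b = (C.card - 1) * b := by
              have : k + (n - 1) = C.card - 1 := by omega
              rw [← this, add_mul]
            omega
          · simp only [hi, if_false, Finset.mem_singleton]
        · intro j hj
          have hpark' := hpark (k + j) (by omega)
          rw [filter_card_split B C hBC] at hpark'
          have hBle : (B.filter fun i => σ i + 1 ≤ a + (k + j) * b).card ≤ k :=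
            le_trans (Finset.card_filter_le _ _) (le_of_eq hk.symm)
          have heq : ((C \ B).filter fun i =>
              (if i ∈ C \ B then σ i - a else 0) + 1 ≤ k * b + j * b) =
              ((C \ B).filter fun i => σ i + 1 ≤ a + (k + j) * b) := by
            apply Finset.filter_congr
            intro i hi
            rw [if_pos hi]
            have := hCBmem i hi
            rw [add_mul]
            omega
          rw [heq]
          omega
    · -- inverse maps to
      intro p hp
      rw [Finset.mem_product] at hp
      obtain ⟨hf, hτ⟩ := hp
      rw [hA, Fintype.mem_piFinset] at hf
      rw [hP, PFset, Finset.mem_filter, Fintype.mem_piFinset] at hτ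
      obtain ⟨hτpi, hτpark⟩ := hτ
      have hfB : ∀ i ∈ B, p.1 i < a := by
        intro i hi; have := hf i; rw [if_pos hi, Finset.mem_range] at this; exact this
      have hτB : ∀ i ∈ C \ B, p.2 i < k * b + (n - 1) * b := by
        intro i hi; have := hτpi i; rw [if_pos hi, Finset.mem_range] at this; exact this
      set σ : ι → ℕ := fun i => if i ∈ B then p.1 i else if i ∈ C then p.2 i + a else 0 with hσ
      have hσB : ∀ i ∈ B, σ i = p.1 i := fun i hi => by rw [hσ]; simp [hi]
      have hσCB : ∀ i ∈ C \ B, σ i = p.2 i + a := by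
        intro i hi
        rw [hσ]
        simp only
        rw [if_neg (Finset.mem_sdiff.1 hi).2, if_pos (Finset.mem_sdiff.1 hi).1]
      rw [Finset.mem_filter]
      constructor
      · rw [PFset, Finset.mem_filter, Fintype.mem_piFinset]
        constructor
        · intro i
          by_cases hiC : i ∈ C
          · rw [if_pos hiC, Finset.mem_range]
            by_cases hiB : i ∈ B
            · rw [hσB i hiB]
              have := hfB i hiB
              nlinarith [Nat.zero_le ((C.card - 1) * b)]
            · have hiCB : i ∈ C \ B := Finset.mem_sdiff.2 ⟨hiC, hiB⟩
              rw [hσCB i hiCB]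
              have h1 := hτB i hiCB
              have hn1 : 1 ≤ n := Finset.card_pos.2 ⟨i, hiCB⟩
              have : k * b + (n - 1) * b = (C.card - 1) * b := by
                have : k + (n - 1) = C.card - 1 := by omega
                rw [← this, add_mul]
              omega
          · rw [if_neg hiC]
            have hiB : i ∉ B := fun h => hiC (hBC h)
            rw [Finset.mem_singleton, hσ]
            simp [hiB, hiC]
        · intro j hj
          by_cases hjk : j < k
          · have hsub : B ⊆ C.filter fun i => σ i + 1 ≤ a + j * b := by
              intro i hi
              refine Finset.mem_filter.2 ⟨hBC hi, ?_⟩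
              rw [hσB i hi]
              have := hfB i hi
              omega
            have := Finset.card_le_card hsub
            omega
          · push_neg at hjk
            set j' := j - k with hj'
            have hj'n : j' < n := by omega
            have hτp := hτpark j' hj'n
            rw [filter_card_split B C hBC]
            have hB : (B.filter fun i => σ i + 1 ≤ a + j * b) = B := by
              apply Finset.filter_true_of_mem
              intro i hi
              rw [hσB i hi]
              have := hfB i hi
              omega
            have hsub : ((C \ B).filter fun i => p.2 i + 1 ≤ k * b + j' * b) ⊆
                ((C \ B).filter fun i => σ i + 1 ≤ a + j * b) := by
              intro i hi
              rw [Finset.mem_filter] at hi ⊢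
              refine ⟨hi.1, ?_⟩
              rw [hσCB i hi.1]
              have h2 := hi.2
              have hjkj : j = k + j' := by omega
              have : a + j * b = a + (k * b + j' * b) := by
                rw [hjkj, add_mul]
              omega
            have := Finset.card_le_card hsub
            rw [hB]
            omega
      · -- fiber condition
        ext i
        rw [Finset.mem_filter]
        constructor
        · rintro ⟨hiC, hilt⟩
          by_contra hiB
          have hiCB : i ∈ C \ B := Finset.mem_sdiff.2 ⟨hiC, hiB⟩
          rw [hσCB i hiCB] at hilt
          omega
        · intro hi
          refine ⟨hBC hi, ?_⟩
          rw [hσB i hi]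
          exact hfB i hi
    · -- left inverse
      intro σ hσ
      rw [Finset.mem_filter] at hσ
      obtain ⟨hσP, hfib⟩ := hσ
      rw [PFset, Finset.mem_filter, Fintype.mem_piFinset] at hσP
      obtain ⟨hpi, _⟩ := hσP
      funext i
      simp only
      by_cases hiB : i ∈ B
      · rw [if_pos hiB, if_pos hiB]
      · rw [if_neg hiB]
        by_cases hiC : i ∈ C
        · have hiCB : i ∈ C \ B := Finset.mem_sdiff.2 ⟨hiC, hiB⟩
          rw [if_pos hiC, if_pos hiCB]
          have haσ : a ≤ σ i := by
            by_contra hlt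
            exact hiB (hfib ▸ Finset.mem_filter.2 ⟨hiC, by omega⟩)
          omega
        · rw [if_neg hiC]
          have := hpi i
          rw [if_neg hiC, Finset.mem_singleton] at this
          exact this.symm
    · -- right inverse
      intro p hp
      rw [Finset.mem_product] at hp
      obtain ⟨hf, hτ⟩ := hp
      rw [hA, Fintype.mem_piFinset] at hf
      rw [hP, PFset, Finset.mem_filter, Fintype.mem_piFinset] at hτ
      obtain ⟨hτpi, _⟩ := hτ
      have hp1 : ∀ i, i ∉ B → p.1 i = 0 := by
        intro i hi; have := hf i; rw [if_neg hi, Finset.mem_singleton] at this; exact this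
      have hp2 : ∀ i, i ∉ C \ B → p.2 i = 0 := by
        intro i hi; have := hτpi i; rw [if_neg hi, Finset.mem_singleton] at this; exact this
      have e1 : (fun i => if i ∈ B then
          (if i ∈ B then p.1 i else if i ∈ C then p.2 i + a else 0) else 0) = p.1 := by
        funext i
        by_cases hiB : i ∈ B
        · simp [hiB]
        · rw [if_neg hiB, hp1 i hiB]
      have e2 : (fun i => if i ∈ C \ B then
          (if i ∈ B then p.1 i else if i ∈ C then p.2 i + a else 0) - a else 0) = p.2 := by
        funext i
        by_cases hiCB : i ∈ C \ B
        · rw [if_pos hiCB, if_neg (Finset.mem_sdiff.1 hiCB).2,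
            if_pos (Finset.mem_sdiff.1 hiCB).1]
          omega
        · rw [if_neg hiCB, hp2 i hiCB]
      exact Prod.ext e1 e2
    · -- weights agree
      intro σ hσ
      rw [Finset.mem_filter] at hσ
      rw [hσ.2]
      apply Finset.prod_congr rfl
      intro i hi
      simp [hi]
  rw [hstep1, Finset.sum_product]
  have : ∀ f ∈ A, ∑ _τ ∈ P, ∏ i ∈ B, X (f i) = (∏ i ∈ B, X (f i)) * (P.card : ℚ) := by
    intro f _
    rw [Finset.sum_const, nsmul_eq_mul, mul_comm]
  rw [Finset.sum_congr rfl this, ← Finset.sum_mul]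
  congr 1
  -- ∑ f ∈ A, ∏ i ∈ B, X (f i) = S ^ k
  have hfac : ∑ f ∈ A, ∏ i ∈ B, X (f i) =
      ∑ f ∈ A, ∏ i : ι, (if i ∈ B then X (f i) else 1) := by
    apply Finset.sum_congr rfl
    intro f _
    rw [← Finset.prod_filter]
    congr 1
    ext i; simp
  rw [hfac, hA, ← Finset.prod_univ_sum (fun i => if i ∈ B then Finset.range a else {0})
    (fun i x => if i ∈ B then X x else 1)]
  have : ∀ i : ι, (∑ j ∈ (if i ∈ B then Finset.range a else {0}),
      (if i ∈ B then X j else 1)) = if i ∈ B then (∑ j ∈ Finset.range a, X j) else 1 := by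
    intro i
    by_cases hi : i ∈ B
    · simp [hi]
    · simp [hi]
  rw [Finset.prod_congr rfl (fun i _ => this i), ← Finset.prod_filter]
  have hfil : Finset.filter (fun i => i ∈ B) Finset.univ = B := by ext i; simp
  rw [hfil, Finset.prod_const]

lemma PF_main : ∀ c : ℕ, ∀ C : Finset ι, C.card = c → C.Nonempty →
    ∀ a b : ℕ, 1 ≤ a → 1 ≤ b → ∀ X : ℕ → ℚ,
    ∑ σ ∈ PFset a b C, ∏ i ∈ C.filter (fun i => σ i < a), X (σ i) =
      (∑ j ∈ Finset.range a, X j) *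
        ((∑ j ∈ Finset.range a, X j) + (C.card : ℚ) * (b : ℚ)) ^ (C.card - 1) := by
  intro c
  induction c using Nat.strong_induction_on with
  | _ c IH =>
    intro C hc hne a b ha hb X
    have hc1 : 1 ≤ c := hc ▸ Finset.card_pos.2 hne
    set S : ℚ := ∑ j ∈ Finset.range a, X j with hS
    set F : ℕ → ℚ := fun k =>
      S ^ k * (if k = c then 1 else (k : ℚ) * b * ((c : ℚ) * b) ^ (c - k - 1)) with hF
    -- Step A: fiberwise decomposition over the set of "small" positions
    have hmaps : ∀ σ ∈ PFset a b C, C.filter (fun i => σ i < a) ∈ C.powerset :=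
      fun σ _ => Finset.mem_powerset.2 (Finset.filter_subset _ _)
    rw [← Finset.sum_fiberwise_of_maps_to hmaps
      (fun σ => ∏ i ∈ C.filter (fun i => σ i < a), X (σ i))]
    -- Step B: each fiber sums to F (B.card)
    have hfib : ∀ B ∈ C.powerset,
        ∑ σ ∈ (PFset a b C).filter (fun σ => C.filter (fun i => σ i < a) = B),
          ∏ i ∈ C.filter (fun i => σ i < a), X (σ i) = F B.card := by
      intro B hB
      have hBC : B ⊆ C := Finset.mem_powerset.1 hB
      rw [fiber_sum a b ha C B hBC X, ← hS]
      by_cases hBc : B = C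
      · subst hBc
        rw [Finset.sdiff_self, PFset_empty_card, hF]
        simp [hc]
      · have hklt : B.card < c := by
          rw [← hc]
          exact Finset.card_lt_card (lt_of_le_of_ne hBC hBc)
      -- two subcases: B empty or not
        by_cases hk0 : B.card = 0
        · have hBe : B = ∅ := Finset.card_eq_zero.1 hk0
          subst hBe
          rw [Finset.sdiff_empty, Finset.card_empty, zero_mul, PFset_a_zero b C hne,
            Finset.card_empty, hF]
          have : ¬(0 = c) := by omega
          simp [this]
        · set k := B.card with hk
          have hk1 : 1 ≤ k := by omega
          set D := C \ B with hD
          have hn : D.card = c - k := by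
            rw [hD, Finset.card_sdiff_of_subset hBC, hc]
          have hn1 : 1 ≤ D.card := by omega
          have hDne : D.Nonempty := Finset.card_pos.1 hn1
          have hIH := IH D.card (by omega) D rfl hDne (k * b) b
            (Nat.one_le_iff_ne_zero.2 (by positivity)) hb (fun _ => 1)
          have hcardP : ((PFset (k * b) b D).card : ℚ) =
              (k : ℚ) * b * ((c : ℚ) * b) ^ (c - k - 1) := by
            have hL : ∑ σ ∈ PFset (k * b) b D,
                ∏ i ∈ D.filter (fun i => σ i < k * b), (fun _ => (1:ℚ)) (σ i) =
                ((PFset (k * b) b D).card : ℚ) := by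
              rw [Finset.sum_congr rfl (fun σ _ => Finset.prod_const_one), Finset.sum_const,
                nsmul_eq_mul, mul_one]
            rw [hL] at hIH
            rw [hIH]
            have hsum1 : ∑ j ∈ Finset.range (k * b), (fun _ => (1:ℚ)) j = (k : ℚ) * b := by
              rw [Finset.sum_const, nsmul_eq_mul, mul_one, Finset.card_range]
              push_cast; ring
            rw [hsum1]
            have h2 : (k : ℚ) * b + (D.card : ℚ) * b = (c : ℚ) * b := by
              rw [hn]; push_cast [Nat.cast_sub (le_of_lt hklt)]; ring
            rw [h2, hn]
          rw [hcardP, hF]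
          simp only [if_neg (by omega : k ≠ c)]
    rw [Finset.sum_congr rfl hfib]
    -- Step C: group by cardinality
    have hgroup : ∑ B ∈ C.powerset, F B.card =
        ∑ j ∈ Finset.range (c + 1), (c.choose j : ℚ) * F j := by
      rw [Finset.sum_powerset, hc]
      apply Finset.sum_congr rfl
      intro j hj
      have : ∀ B ∈ Finset.powersetCard j C, F B.card = F j := by
        intro B hB
        rw [(Finset.mem_powersetCard.1 hB).2]
      rw [Finset.sum_congr rfl this, Finset.sum_const, Finset.card_powersetCard, hc,
        nsmul_eq_mul]
    rw [hgroup, hc]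
    -- Step D: the binomial algebra
    have hpow : (S + (c : ℚ) * b) ^ (c - 1) =
        ∑ j ∈ Finset.range c, S ^ j * ((c : ℚ) * b) ^ (c - 1 - j) * ((c-1).choose j : ℚ) := by
      rw [add_pow]
      have : c - 1 + 1 = c := by omega
      rw [this]
    rw [hpow, Finset.mul_sum]
    rw [Finset.sum_range_succ']
    have h0 : (c.choose 0 : ℚ) * F 0 = 0 := by
      have hne0 : ¬(0 = c) := by omega
      rw [hF]
      simp [hne0]
    rw [h0, add_zero]
    apply Finset.sum_congr rfl
    intro j hj
    rw [Finset.mem_range] at hj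
    rw [hF]
    simp only
    by_cases hjc : j + 1 = c
    · rw [if_pos hjc]
      have h1 : c.choose (j + 1) = 1 := by rw [hjc, Nat.choose_self]
      have h2 : (c - 1).choose j = 1 := by
        have : j = c - 1 := by omega
        rw [this, Nat.choose_self]
      have h3 : c - 1 - j = 0 := by omega
      rw [h1, h2, h3, ← hjc]
      push_cast
      ring
    · rw [if_neg hjc]
      have hch : (c : ℚ) * ((c-1).choose j : ℚ) = (c.choose (j+1) : ℚ) * (j + 1 : ℚ) := by
        have := Nat.add_one_mul_choose_eq (c - 1) j
        have hcc : c - 1 + 1 = c := by omega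
        rw [hcc] at this
        exact_mod_cast congrArg (Nat.cast (R := ℚ)) this
      have hexp : c - 1 - j = (c - (j + 1) - 1) + 1 := by omega
      rw [hexp]
      push_cast
      linear_combination (-(S ^ (j+1) * (b:ℚ) * ((c:ℚ) * (b:ℚ)) ^ (c - (j+1) - 1))) * hch

end Aux

theorem gf_ABPF_multivariate (a b m : ℕ) (ha : 1 ≤ a) (hb : 1 ≤ b) (hm : 1 ≤ m)
    (x : Fin a → ℚ) :
    ∑ π ∈ abpf a b m,
        ∏ j : Fin a,
          x j ^ (Finset.univ.filter (fun i : Fin m => (π i : ℕ) = (j : ℕ))).card =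
      (∑ j, x j) * ((∑ j, x j) + m * b) ^ (m - 1) := by
  classical
  set N := a + (m - 1) * b with hN
  have hN0 : 0 < N := by omega
  set X : ℕ → ℚ := fun k => if h : k < a then x ⟨k, h⟩ else 0 with hX
  have hXj : ∀ j : Fin a, X (j : ℕ) = x j := by
    intro j
    rw [hX]
    simp only [dif_pos j.isLt]
  have hcard : (Finset.univ : Finset (Fin m)).card = m := by simp
  -- the sum over abpf equals the sum over PFset a b univ
  have htrans : ∑ π ∈ abpf a b m,
      ∏ j : Fin a,
        x j ^ (Finset.univ.filter (fun i : Fin m => (π i : ℕ) = (j : ℕ))).card =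
      ∑ σ ∈ PFset a b (Finset.univ : Finset (Fin m)),
        ∏ i ∈ Finset.univ.filter (fun i => σ i < a), X (σ i) := by
    apply Finset.sum_nbij' (i := fun π => fun i => (π i : ℕ))
      (j := fun σ => fun i => (⟨σ i % N, Nat.mod_lt _ hN0⟩ : Fin N))
    · intro π hπ
      rw [abpf, Finset.mem_filter] at hπ
      rw [PFset, Finset.mem_filter, Fintype.mem_piFinset]
      refine ⟨?_, ?_⟩
      · intro i
        simp only [Finset.mem_univ, if_true, Finset.mem_range, hcard]
        exact (π i).isLt
      · intro j hj
        rw [hcard] at hj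
        exact hπ.2 ⟨j, hj⟩
    · intro σ hσ
      rw [PFset, Finset.mem_filter, Fintype.mem_piFinset] at hσ
      obtain ⟨hpi, hpark⟩ := hσ
      have hlt : ∀ i, σ i < N := by
        intro i
        have := hpi i
        rw [if_pos (Finset.mem_univ i), Finset.mem_range, hcard] at this
        exact this
      rw [abpf, Finset.mem_filter]
      refine ⟨Finset.mem_univ _, ?_⟩
      intro i
      have := hpark (i : ℕ) (by rw [hcard]; exact i.isLt)
      simpa [Nat.mod_eq_of_lt (hlt _)] using this
    · intro π hπ
      funext i
      simp [Nat.mod_eq_of_lt (π i).isLt]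
    · intro σ hσ
      rw [PFset, Finset.mem_filter, Fintype.mem_piFinset] at hσ
      have hlt : ∀ i, σ i < N := by
        intro i
        have := hσ.1 i
        rw [if_pos (Finset.mem_univ i), Finset.mem_range, hcard] at this
        exact this
      funext i
      simp [Nat.mod_eq_of_lt (hlt i)]
    · -- weights agree
      intro π hπ
      have key : ∏ i ∈ Finset.univ.filter (fun i : Fin m => ((π i : ℕ)) < a), X ((π i : ℕ)) =
          ∏ v ∈ Finset.range a,
            X v ^ (Finset.univ.filter (fun i : Fin m => (π i : ℕ) = v)).card := by
        rw [← Finset.prod_fiberwise_of_maps_to (t := Finset.range a)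
          (g := fun i : Fin m => (π i : ℕ))
          (fun i hi => Finset.mem_range.2 (Finset.mem_filter.1 hi).2)
          (fun i => X ((π i : ℕ)))]
        apply Finset.prod_congr rfl
        intro v hv
        rw [Finset.mem_range] at hv
        have hset : (Finset.univ.filter (fun i : Fin m => ((π i : ℕ)) < a)).filter
            (fun i => (π i : ℕ) = v) =
            Finset.univ.filter (fun i : Fin m => (π i : ℕ) = v) := by
          ext i
          simp only [Finset.mem_filter, Finset.mem_univ, true_and]
          constructor
          · rintro ⟨_, h⟩; exact h
          · intro h; exact ⟨by omega, h⟩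
        rw [hset, Finset.prod_congr rfl (fun i hi => by
          rw [(Finset.mem_filter.1 hi).2]), Finset.prod_const]
      rw [key]
      rw [← Fin.prod_univ_eq_prod_range
        (fun v => X v ^ (Finset.univ.filter (fun i : Fin m => (π i : ℕ) = v)).card) a]
      apply Finset.prod_congr rfl
      intro j _
      rw [hXj]
  rw [htrans]
  have : Nonempty (Fin m) := ⟨⟨0, by omega⟩⟩
  have hmain := PF_main m (Finset.univ : Finset (Fin m)) hcard
    Finset.univ_nonempty a b ha hb X
  rw [hmain, hcard]
  have hsum : ∑ j ∈ Finset.range a, X j = ∑ j, x j := by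
    rw [← Fin.sum_univ_eq_sum_range (fun v => X v) a]
    exact Finset.sum_congr rfl (fun j _ => hXj j)
  rw [hsum]
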